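/- Let Γ be a connected negative definite plumbing tree, u an end-vertex, Γ∖u the deleted graph, and R the restriction map. Then for any l'' ∈ L'(Γ): l'' = i(R(l'')) + ((l'', E_u^*)/(E_u^*, E_u^*)) · E_u^*, and (i(l), E_u^*) = 0 for every l ∈ L'(Γ∖u). Moreover K_{Γ∖u} = R(K_Γ). -/

import Mathlib

open scoped BigOperators Matrix

section Defs

variable {V : Type*} [Fintype V] [DecidableEq V]

/-- The bilinear pairing `(x, y) = xᵀ M y` over `ℚ`, for an integer matrix `M`. -/
def pairing (M : Matrix V V ℤ) (x y : V → ℚ) : ℚ :=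
  x ⬝ᵥ (M.map fun m => (m : ℚ)).mulVec y

def NegDefinite (M : Matrix V V ℤ) : Prop :=
  ∀ x : V → ℚ, x ≠ 0 → pairing M x x < 0

def baseE (v : V) : V → ℚ := Pi.single v 1

/-- `Estar v` is the antidual basis: `(E_v^*, E_w) = -δ_{vw}`. -/
def IsAntidual (M : Matrix V V ℤ) (Estar : V → V → ℚ) : Prop :=
  ∀ v w, pairing M (Estar v) (baseE w) = if v = w then -1 else 0

def IsPlumbing (M : Matrix V V ℤ) : Prop :=
  M.IsSymm ∧ NegDefinite M ∧ (∀ v w, v ≠ w → M v w = 0 ∨ M v w = 1) ∧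
    (SimpleGraph.fromRel fun v w => M v w = 1).Connected

/-- The valency (number of neighbours) of a vertex. -/
def valency (M : Matrix V V ℤ) (v : V) : ℕ :=
  (Finset.univ.filter fun w => w ≠ v ∧ M v w = 1).card

def IsPlumbingTree (M : Matrix V V ℤ) : Prop :=
  IsPlumbing M ∧ ∑ v, valency M v = 2 * (Fintype.card V - 1)

/-- `k` is a characteristic element: `k ∈ L'` and `(k + l, l) ∈ 2ℤ` for all `l ∈ L`. -/
def IsChar (M : Matrix V V ℤ) (k : V → ℚ) : Prop :=
  (∀ v, ∃ m : ℤ, pairing M k (baseE v) = m) ∧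
  ∀ l : V → ℤ, ∃ m : ℤ, pairing M (k + fun v => (l v : ℚ)) (fun v => (l v : ℚ)) = 2 * m

/-- The canonical class, defined by adjunction: `(K + E_v, E_v) = -2`. -/
def IsCanonical (M : Matrix V V ℤ) (K : V → ℚ) : Prop :=
  ∀ v, pairing M (K + baseE v) (baseE v) = -2

/-- The weight function `w(k) = -(k² + |V|)/8`. -/
def wfun (M : Matrix V V ℤ) (k : V → ℚ) : ℚ :=
  -(pairing M k k + Fintype.card V) / 8

/-- The weight of the cube `(k, I')`: `max_{J ⊆ I'} w(k + 2Σ_{j∈J} E_j)`. -/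
def cubeW (M : Matrix V V ℤ) (k : V → ℚ) (I' : Finset V) : ℚ :=
  I'.powerset.sup' (Finset.powerset_nonempty I') fun J => wfun M (k + 2 • ∑ j ∈ J, baseE j)

/-- `Σ_{I'⊆V} (-1)^{|I'|+1} w((k,I'))`. -/
def cubeSum (M : Matrix V V ℤ) (k : V → ℚ) : ℚ :=
  ∑ I' ∈ (Finset.univ : Finset V).powerset, (-1 : ℚ) ^ (I'.card + 1) * cubeW M k I'

/-- The matrix of the graph with the vertex `u` deleted. -/
def delMat (M : Matrix V V ℤ) (u : V) : Matrix {v : V // v ≠ u} {v : V // v ≠ u} ℤ :=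
  fun v w => M v.1 w.1

end Defs

/-- Extension by zero of a vector on the deleted-vertex index set. -/
def extZero {V : Type*} [DecidableEq V] {u : V} (x : {v : V // v ≠ u} → ℚ) : V → ℚ :=
  fun v => if h : v = u then 0 else x ⟨v, h⟩

set_option linter.unusedSectionVars false
section Helpers

variable {V : Type*} [Fintype V] [DecidableEq V]

lemma pairing_eq_sum (M : Matrix V V ℤ) (x y : V → ℚ) :
    pairing M x y = ∑ v, ∑ w, x v * (M v w : ℚ) * y w := by
  simp [pairing, Matrix.mulVec, dotProduct, Finset.mul_sum, mul_assoc]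

lemma pairing_symm {M : Matrix V V ℤ} (hM : M.IsSymm) (x y : V → ℚ) :
    pairing M x y = pairing M y x := by
  rw [pairing_eq_sum, pairing_eq_sum, Finset.sum_comm]
  refine Finset.sum_congr rfl fun w _ => Finset.sum_congr rfl fun v _ => ?_
  rw [hM.apply w v]; ring

lemma pairing_add_right (M : Matrix V V ℤ) (x y z : V → ℚ) :
    pairing M x (y + z) = pairing M x y + pairing M x z := by
  simp [pairing_eq_sum, mul_add, Finset.sum_add_distrib]

lemma pairing_sub_right (M : Matrix V V ℤ) (x y z : V → ℚ) :
    pairing M x (y - z) = pairing M x y - pairing M x z := by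
  simp [pairing_eq_sum, mul_sub, Finset.sum_sub_distrib]

lemma pairing_smul_right (M : Matrix V V ℤ) (c : ℚ) (x y : V → ℚ) :
    pairing M x (c • y) = c * pairing M x y := by
  simp only [pairing_eq_sum, Finset.mul_sum]
  refine Finset.sum_congr rfl fun v _ => Finset.sum_congr rfl fun w _ => ?_
  simp [Pi.smul_apply]; ring

lemma pairing_sub_left (M : Matrix V V ℤ) (x y z : V → ℚ) :
    pairing M (x - y) z = pairing M x z - pairing M y z := by
  simp [pairing_eq_sum, sub_mul, Finset.sum_sub_distrib]

lemma pairing_add_left (M : Matrix V V ℤ) (x y z : V → ℚ) :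
    pairing M (x + y) z = pairing M x z + pairing M y z := by
  simp [pairing_eq_sum, add_mul, Finset.sum_add_distrib]

/-- Expansion in the second argument over the standard basis. -/
lemma pairing_expand_right (M : Matrix V V ℤ) (x y : V → ℚ) :
    pairing M x y = ∑ w, y w * pairing M x (baseE w) := by
  rw [pairing_eq_sum]
  rw [Finset.sum_comm]
  refine Finset.sum_congr rfl fun w _ => ?_
  rw [pairing_eq_sum, Finset.mul_sum]
  refine Finset.sum_congr rfl fun v _ => ?_
  simp [baseE, Pi.single_apply, Finset.mul_sum, mul_comm, mul_assoc, mul_left_comm]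

lemma sum_extZero_aux {u : V} (f : V → ℚ) (hf : f u = 0) :
    ∑ v, f v = ∑ v : {v : V // v ≠ u}, f v.1 := by
  classical
  rw [show (∑ v : {v : V // v ≠ u}, f v.1)
      = ∑ v ∈ Finset.univ.subtype (· ≠ u), f v.1 by rw [Finset.subtype_univ],
    Finset.sum_subtype_eq_sum_filter]
  symm
  apply Finset.sum_subset (Finset.filter_subset _ _)
  intro x _ hx
  have : x = u := by
    by_contra h
    exact hx (Finset.mem_filter.mpr ⟨Finset.mem_univ x, h⟩)
  rw [this, hf]

lemma extZero_u {u : V} (a : {v : V // v ≠ u} → ℚ) : extZero a u = 0 := by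
  simp [extZero]

lemma extZero_ne {u : V} (a : {v : V // v ≠ u} → ℚ) (v : {v : V // v ≠ u}) :
    extZero a v.1 = a v := by
  simp [extZero, v.2]

lemma pairing_extZero {u : V} (M : Matrix V V ℤ) (a b : {v : V // v ≠ u} → ℚ) :
    pairing M (extZero a) (extZero b) = pairing (delMat M u) a b := by
  rw [pairing_eq_sum, pairing_eq_sum]
  rw [sum_extZero_aux (u := u) _ (by simp [extZero_u])]
  refine Finset.sum_congr rfl fun v _ => ?_
  rw [sum_extZero_aux (u := u) _ (by simp [extZero_u])]
  refine Finset.sum_congr rfl fun w _ => ?_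
  rw [extZero_ne, extZero_ne, delMat]

lemma extZero_baseE {u : V} (v : {v : V // v ≠ u}) :
    extZero (baseE v) = baseE v.1 := by
  funext w
  by_cases h : w = u
  · subst h; simp [extZero, baseE, Pi.single_apply, Ne.symm v.2]
  · simp only [extZero, dif_neg h, baseE, Pi.single_apply]
    by_cases h2 : w = v.1
    · simp [h2, Subtype.ext_iff]
    · rw [if_neg h2, if_neg (by simpa [Subtype.ext_iff] using h2)]

lemma extZero_eq_zero {u : V} (a : {v : V // v ≠ u} → ℚ) (h : extZero a = 0) :
    a = 0 := by
  funext v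
  have := congrFun h v.1
  rwa [extZero_ne] at this

end Helpers

/-- For an end-vertex `u`: `l'' = i(R(l'')) + ((l'', E_u^*)/(E_u^*, E_u^*))·E_u^*`
for every `l'' ∈ L'(Γ)`, `(i(l), E_u^*) = 0` for every `l ∈ L'(Γ∖u)`, and
`K_{Γ∖u} = R(K_Γ)`. -/
theorem restriction_decomposition_and_canonical
    (s : ℕ) (hs : 2 ≤ s) (I : Matrix (Fin s) (Fin s) ℤ)
    (htree : IsPlumbingTree I)
    (u : Fin s) (hu : valency I u = 1)
    (Estar : Fin s → Fin s → ℚ) (hE : IsAntidual I Estar)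
    (R : (Fin s → ℚ) → ({v : Fin s // v ≠ u} → ℚ))
    (hR : ∀ (x : Fin s → ℚ) (l : {v : Fin s // v ≠ u} → ℚ),
      pairing (delMat I u) (R x) l = pairing I x (extZero l))
    (K : Fin s → ℚ) (hK : IsCanonical I K)
    (K0 : {v : Fin s // v ≠ u} → ℚ) (hK0 : IsCanonical (delMat I u) K0) :
    (∀ l'' : Fin s → ℚ,
        l'' = extZero (R l'')
          + (pairing I l'' (Estar u) / pairing I (Estar u) (Estar u)) • Estar u) ∧
    (∀ l : {v : Fin s // v ≠ u} → ℚ, pairing I (extZero l) (Estar u) = 0) ∧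
    K0 = R K := by
  obtain ⟨⟨hsymm, hneg, -, -⟩, -⟩ := htree
  -- basic facts about Estar u
  have hEne : Estar u ≠ 0 := by
    intro h
    have := hE u u
    simp [h, pairing_eq_sum] at this
  have hq_neg : pairing I (Estar u) (Estar u) < 0 := hneg _ hEne
  have hq_ne : pairing I (Estar u) (Estar u) ≠ 0 := ne_of_lt hq_neg
  -- second claim
  have claim2 : ∀ l : {v : Fin s // v ≠ u} → ℚ, pairing I (extZero l) (Estar u) = 0 := by
    intro l
    rw [pairing_symm hsymm, pairing_expand_right]
    have : ∀ w : Fin s, extZero l w * pairing I (Estar u) (baseE w)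
        = if u = w then -(extZero l w) else 0 := by
      intro w
      rw [hE u w]
      split <;> simp_all
    simp only [mul_comm, this]
    rw [Finset.sum_ite_eq Finset.univ u (fun w => -(extZero l w)) ]
    simp [extZero_u]
  -- Estar u at coordinate u
  have hEuu : Estar u u = -(pairing I (Estar u) (Estar u)) := by
    have h1 : pairing I (Estar u) (Estar u)
        = ∑ w, Estar u w * pairing I (Estar u) (baseE w) := pairing_expand_right _ _ _
    have h2 : ∀ w : Fin s, Estar u w * pairing I (Estar u) (baseE w)
        = if u = w then -(Estar u w) else 0 := by
      intro w
      rw [hE u w]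
      split <;> simp_all
    rw [h1]
    simp only [h2]
    rw [Finset.sum_ite_eq Finset.univ u (fun w => -(Estar u w))]
    simp
  have hEuu_ne : Estar u u ≠ 0 := by rw [hEuu]; exact neg_ne_zero.mpr hq_ne
  -- first claim
  have claim1 : ∀ l'' : Fin s → ℚ,
      l'' = extZero (R l'')
        + (pairing I l'' (Estar u) / pairing I (Estar u) (Estar u)) • Estar u := by
    intro l''
    set c : ℚ := pairing I l'' (Estar u) / pairing I (Estar u) (Estar u) with hc
    set d : Fin s → ℚ := l'' - extZero (R l'') - c • Estar u with hd
    have key : ∀ w : Fin s, pairing I d (baseE w) = 0 := by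
      have hdw : ∀ w : Fin s, w ≠ u → pairing I d (baseE w) = 0 := by
        intro w hw
        have hres : pairing I (extZero (R l'')) (baseE w) = pairing I l'' (baseE w) := by
          have := hR l'' (baseE (⟨w, hw⟩ : {v : Fin s // v ≠ u}))
          rw [← pairing_extZero, extZero_baseE] at this
          exact this
        have hstar : pairing I (Estar u) (baseE w) = 0 := by
          rw [hE u w, if_neg (by exact fun h => hw h.symm)]
        rw [hd, pairing_sub_left, pairing_sub_left, hres]
        rw [pairing_symm hsymm (c • Estar u), pairing_smul_right,
          pairing_symm hsymm (baseE w) (Estar u), hstar]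
        ring
      have hdE : pairing I d (Estar u) = 0 := by
        rw [hd, pairing_sub_left, pairing_sub_left, claim2]
        rw [pairing_symm hsymm (c • Estar u), pairing_smul_right,
          pairing_symm hsymm (Estar u) (Estar u)] -- no-op but fine
        rw [hc]
        field_simp
        ring
      intro w
      by_cases hw : w = u
      · rw [hw]
        have hexp : pairing I d (Estar u)
            = ∑ w, Estar u w * pairing I d (baseE w) := pairing_expand_right _ _ _
        have : ∑ w, Estar u w * pairing I d (baseE w)
            = Estar u u * pairing I d (baseE u) := by
          rw [Finset.sum_eq_single u]
          · intro b _ hb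
            rw [hdw b hb, mul_zero]
          · intro h; exact absurd (Finset.mem_univ u) h
        rw [hexp, this] at hdE
        exact (mul_eq_zero.mp hdE).resolve_left hEuu_ne
      · exact hdw w hw
    have hdd : pairing I d d = 0 := by
      rw [pairing_expand_right]
      simp [key]
    have hd0 : d = 0 := by
      by_contra h
      exact absurd hdd (ne_of_lt (hneg d h))
    have h0 : l'' - extZero (R l'') - c • Estar u = 0 := hd0
    funext v
    have hv := congrFun h0 v
    simp only [Pi.sub_apply, Pi.zero_apply, Pi.add_apply] at hv ⊢
    linarith
  refine ⟨claim1, claim2, ?_⟩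
  -- third claim
  have hdelsymm : (delMat I u).IsSymm := by
    ext v w
    simp [delMat, Matrix.transpose_apply, hsymm.apply w.1 v.1]
  have hdelneg : NegDefinite (delMat I u) := by
    intro x hx
    rw [← pairing_extZero]
    refine hneg _ fun h => hx (extZero_eq_zero _ h)
  set d : {v : Fin s // v ≠ u} → ℚ := K0 - R K with hd
  have key : ∀ v : {v : Fin s // v ≠ u}, pairing (delMat I u) d (baseE v) = 0 := by
    intro v
    have h1 : pairing (delMat I u) (R K) (baseE v) = pairing I K (baseE v.1) := by
      rw [hR, extZero_baseE]
    have h2 : pairing (delMat I u) (baseE v) (baseE v) = pairing I (baseE v.1) (baseE v.1) := by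
      rw [← pairing_extZero, extZero_baseE]
    have hK1 := hK v.1
    have hK2 := hK0 v
    rw [IsCanonical] at *
    rw [pairing_add_left] at hK1 hK2
    rw [hd, pairing_sub_left, h1]
    rw [h2] at hK2
    linarith
  have hdd : pairing (delMat I u) d d = 0 := by
    rw [pairing_expand_right]
    simp [key]
  have hd0 : d = 0 := by
    by_contra h
    exact absurd hdd (ne_of_lt (hdelneg d h))
  rw [hd] at hd0
  exact sub_eq_zero.mp hd0
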